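/- For every T > 0 there exists a constant C(T) > 0 such that for all real numbers κ₁, κ₂ and every t ∈ [0, T]: | ∫₀^t e^{−i t₁ κ₁} ( ∫₀^{t₁} t₂² e^{−i t₂ κ₂} dt₂ ) dt₁ | ≤ C(T) (1 + |κ₁|)^{−1}. (This is the oscillatory double-integral bound, equation (X5) of the paper, obtained by switching the order of integration and integrating first in t₁.) -/

import Mathlib

open intervalIntegral Complex

lemma aux_cont (κ : ℝ) : Continuous fun x : ℝ => Complex.exp (-Complex.I * (x:ℂ) * (κ:ℂ)) := by
  fun_prop

lemma aux_cont2 (κ : ℝ) : Continuous fun x : ℝ => ((x:ℂ))^2 * Complex.exp (-Complex.I * (x:ℂ) * (κ:ℂ)) := by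
  fun_prop

lemma aux_inner (κ₂ : ℝ) {s : ℝ} (hs : 0 ≤ s) :
    ‖∫ t₂ in (0:ℝ)..s, ((t₂:ℂ))^2 * Complex.exp (-Complex.I * (t₂:ℂ) * (κ₂:ℂ))‖ ≤ s^3/3 := by
  have h1 : ∀ x : ℝ, ‖((x:ℂ))^2 * Complex.exp (-Complex.I * (x:ℂ) * (κ₂:ℂ))‖ = x^2 := by
    intro x; simp [Complex.norm_exp, _root_.sq_abs]
  calc ‖∫ t₂ in (0:ℝ)..s, ((t₂:ℂ))^2 * Complex.exp (-Complex.I * (t₂:ℂ) * (κ₂:ℂ))‖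
      ≤ ∫ t₂ in (0:ℝ)..s, ‖((t₂:ℂ))^2 * Complex.exp (-Complex.I * (t₂:ℂ) * (κ₂:ℂ))‖ :=
        intervalIntegral.norm_integral_le_integral_norm hs
    _ = ∫ t₂ in (0:ℝ)..s, t₂^2 := by simp_rw [h1]
    _ = s^3/3 := by rw [integral_pow]; norm_num

lemma aux_F_deriv (κ₂ : ℝ) (x : ℝ) :
    HasDerivAt (fun s : ℝ => ∫ t₂ in (0:ℝ)..s, ((t₂:ℂ))^2 * Complex.exp (-Complex.I * (t₂:ℂ) * (κ₂:ℂ)))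
      (((x:ℂ))^2 * Complex.exp (-Complex.I * (x:ℂ) * (κ₂:ℂ))) x :=
  intervalIntegral.integral_hasDerivAt_right
    ((aux_cont2 κ₂).intervalIntegrable 0 x)
    ((aux_cont2 κ₂).stronglyMeasurableAtFilter _ _)
    (aux_cont2 κ₂).continuousAt

lemma aux_v_deriv (κ₁ : ℝ) (hκ : κ₁ ≠ 0) (x : ℝ) :
    HasDerivAt (fun s : ℝ => Complex.exp (-Complex.I * (s:ℂ) * (κ₁:ℂ)) / (-Complex.I * (κ₁:ℂ)))
      (Complex.exp (-Complex.I * (x:ℂ) * (κ₁:ℂ))) x := by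
  have hne : -Complex.I * (κ₁:ℂ) ≠ 0 := by simp [Complex.ext_iff, hκ]
  have h0 : HasDerivAt (fun s : ℝ => (-Complex.I * (s:ℂ) * (κ₁:ℂ)))
      (-Complex.I * (κ₁:ℂ)) x := by
    have := ((Complex.ofRealCLM.hasDerivAt (x := x)).const_mul (-Complex.I)).mul_const ((κ₁:ℂ))
    simpa using this
  have h3 := h0.cexp.div_const (-Complex.I * (κ₁:ℂ))
  rwa [mul_div_cancel_right₀ _ hne] at h3

/-- Oscillatory double-integral bound (equation (X5)). -/
theorem stmt11 (T : ℝ) (hT : 0 < T) :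
    ∃ C > 0, ∀ κ₁ κ₂ : ℝ, ∀ t ∈ Set.Icc (0 : ℝ) T,
      ‖∫ t₁ in (0 : ℝ)..t, Complex.exp (-Complex.I * (t₁ : ℂ) * (κ₁ : ℂ)) *
          ∫ t₂ in (0 : ℝ)..t₁, ((t₂ : ℂ)) ^ 2 * Complex.exp (-Complex.I * (t₂ : ℂ) * (κ₂ : ℂ))‖
        ≤ C * (1 + |κ₁|)⁻¹ := by
  refine ⟨T^4/3 + 2*T^3/3, by positivity, fun κ₁ κ₂ t ht => ?_⟩
  obtain ⟨ht0, htT⟩ := ht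
  set F : ℝ → ℂ := fun s => ∫ t₂ in (0:ℝ)..s, ((t₂:ℂ))^2 * Complex.exp (-Complex.I * (t₂:ℂ) * (κ₂:ℂ)) with hF
  set N : ℝ := ‖∫ t₁ in (0:ℝ)..t, Complex.exp (-Complex.I * (t₁:ℂ) * (κ₁:ℂ)) * F t₁‖ with hN
  have hFbound : ∀ s ∈ Set.Icc (0:ℝ) T, ‖F s‖ ≤ T^3/3 := by
    intro s hs
    calc ‖F s‖ ≤ s^3/3 := aux_inner κ₂ hs.1
      _ ≤ T^3/3 := by gcongr; exact hs.1; exact hs.2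
  -- trivial bound: N ≤ T^4/3
  have htriv : N ≤ T^4/3 := by
    have := intervalIntegral.norm_integral_le_of_norm_le_const
      (a := 0) (b := t) (C := T^3/3)
      (f := fun t₁ => Complex.exp (-Complex.I * (t₁:ℂ) * (κ₁:ℂ)) * F t₁) ?_
    · calc N ≤ T^3/3 * |t - 0| := this
        _ ≤ T^3/3 * T := by
            rw [sub_zero, _root_.abs_of_nonneg ht0]; gcongr <;> positivity
        _ = T^4/3 := by ring
    · intro x hx
      rw [Set.uIoc_of_le ht0] at hx
      have hx' : x ∈ Set.Icc (0:ℝ) T := ⟨le_of_lt hx.1, hx.2.trans htT⟩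
      rw [norm_mul]
      have h1 : ‖Complex.exp (-Complex.I * (x:ℂ) * (κ₁:ℂ))‖ = 1 := by simp [Complex.norm_exp]
      rw [h1, one_mul]
      exact hFbound x hx'
  -- oscillatory bound: |κ₁| * N ≤ 2*T^3/3
  have hosc : |κ₁| * N ≤ 2*T^3/3 := by
    rcases eq_or_ne κ₁ 0 with h | hκ
    · simp [h]; positivity
    have hκpos : 0 < |κ₁| := abs_pos.mpr hκ
    have hne : -Complex.I * (κ₁:ℂ) ≠ 0 := by simp [Complex.ext_iff, hκ]
    set v : ℝ → ℂ := fun s => Complex.exp (-Complex.I * (s:ℂ) * (κ₁:ℂ)) / (-Complex.I * (κ₁:ℂ)) with hv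
    have hvnorm : ∀ x : ℝ, ‖v x‖ = |κ₁|⁻¹ := by
      intro x
      rw [hv]
      simp only [norm_div, norm_mul]
      simp [Complex.norm_exp]
    have hibp : ∫ t₁ in (0:ℝ)..t, F t₁ * Complex.exp (-Complex.I * (t₁:ℂ) * (κ₁:ℂ))
        = F t * v t - F 0 * v 0 - ∫ t₁ in (0:ℝ)..t,
            (((t₁:ℂ))^2 * Complex.exp (-Complex.I * (t₁:ℂ) * (κ₂:ℂ))) * v t₁ := by
      exact intervalIntegral.integral_mul_deriv_eq_deriv_mul
        (fun x _ => aux_F_deriv κ₂ x) (fun x _ => aux_v_deriv κ₁ hκ x)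
        ((aux_cont2 κ₂).intervalIntegrable 0 t) ((aux_cont κ₁).intervalIntegrable 0 t)
    have hF0 : F 0 = 0 := intervalIntegral.integral_same
    have hcomm : (∫ t₁ in (0:ℝ)..t, Complex.exp (-Complex.I * (t₁:ℂ) * (κ₁:ℂ)) * F t₁)
        = ∫ t₁ in (0:ℝ)..t, F t₁ * Complex.exp (-Complex.I * (t₁:ℂ) * (κ₁:ℂ)) := by
      simp_rw [mul_comm]
    have hNle : N ≤ 2*T^3/3 * |κ₁|⁻¹ := by
      rw [hN, hcomm, hibp, hF0, zero_mul, sub_zero]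
      have hterm1 : ‖F t * v t‖ ≤ T^3/3 * |κ₁|⁻¹ := by
        rw [norm_mul, hvnorm]
        gcongr
        exact hFbound t ⟨ht0, htT⟩
      have hterm2 : ‖∫ t₁ in (0:ℝ)..t,
          (((t₁:ℂ))^2 * Complex.exp (-Complex.I * (t₁:ℂ) * (κ₂:ℂ))) * v t₁‖ ≤ T^3/3 * |κ₁|⁻¹ := by
        have hnorm : ∀ x : ℝ, ‖(((x:ℂ))^2 * Complex.exp (-Complex.I * (x:ℂ) * (κ₂:ℂ))) * v x‖
            = x^2 * |κ₁|⁻¹ := by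
          intro x
          rw [norm_mul, norm_mul, hvnorm]
          simp [Complex.norm_exp, _root_.sq_abs]
        calc ‖∫ t₁ in (0:ℝ)..t, (((t₁:ℂ))^2 * Complex.exp (-Complex.I * (t₁:ℂ) * (κ₂:ℂ))) * v t₁‖
            ≤ ∫ t₁ in (0:ℝ)..t, ‖(((t₁:ℂ))^2 * Complex.exp (-Complex.I * (t₁:ℂ) * (κ₂:ℂ))) * v t₁‖ :=
              intervalIntegral.norm_integral_le_integral_norm ht0
          _ = ∫ t₁ in (0:ℝ)..t, t₁^2 * |κ₁|⁻¹ := by simp_rw [hnorm]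
          _ = (t^3/3) * |κ₁|⁻¹ := by
              rw [intervalIntegral.integral_mul_const, integral_pow]; norm_num
          _ ≤ T^3/3 * |κ₁|⁻¹ := by gcongr <;> positivity
      calc ‖F t * v t - ∫ t₁ in (0:ℝ)..t,
            (((t₁:ℂ))^2 * Complex.exp (-Complex.I * (t₁:ℂ) * (κ₂:ℂ))) * v t₁‖
          ≤ ‖F t * v t‖ + ‖∫ t₁ in (0:ℝ)..t,
            (((t₁:ℂ))^2 * Complex.exp (-Complex.I * (t₁:ℂ) * (κ₂:ℂ))) * v t₁‖ := norm_sub_le _ _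
        _ ≤ T^3/3 * |κ₁|⁻¹ + T^3/3 * |κ₁|⁻¹ := add_le_add hterm1 hterm2
        _ = 2*T^3/3 * |κ₁|⁻¹ := by ring
    calc |κ₁| * N ≤ |κ₁| * (2*T^3/3 * |κ₁|⁻¹) := by gcongr
      _ = 2*T^3/3 := by field_simp
  -- combine
  have hpos : (0:ℝ) < 1 + |κ₁| := by positivity
  rw [← div_eq_mul_inv, le_div_iff₀ hpos]
  nlinarith [abs_nonneg κ₁, norm_nonneg (∫ t₁ in (0:ℝ)..t, Complex.exp (-Complex.I * (t₁:ℂ) * (κ₁:ℂ)) * F t₁)]
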